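/- arXiv:0811.1465 — 8 statements merged into one kernel-verified Lean document; each statement's English description precedes it below -/
import Mathlib

section
/- Let D ≥ 1, d ≥ 1, let g : Fin D → Fin D → ℂ be symmetric, and let γ : Fin D → M_d(ℂ) satisfy the Clifford relations γ_μ γ_ν + γ_ν γ_μ = 2 g(μ,ν)·I_d for all μ,ν. Let p : Fin D → ℂ. In the ring of 3×3 block matrices over M_d(ℂ), define V_μ to be the block matrix whose (1,2)-block and (2,3)-block both equal γ_μ, whose (3,1)-block equals p(μ)·I_d, and whose other blocks are zero. Then for all μ,ν,ρ ∈ Fin D the threefold symmetric bracket satisfies {V_μ, V_ν, V_ρ} = 2(g(μ,ν)p(ρ) + g(μ,ρ)p(ν) + g(ν,ρ)p(μ))·I, where I is the identity 3d×3d matrix. -/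
/-- The cubic extension of the Poincaré algebra realized on 3×3 block matrices built
from Dirac matrices: `{V_μ, V_ν, V_ρ} = 2(g_{μν}p_ρ + g_{μρ}p_ν + g_{νρ}p_μ)·1`. -/
theorem cubic_bracket_dirac_blocks
    (D d : ℕ) (hD : 1 ≤ D) (hd : 1 ≤ d)
    (g : Fin D → Fin D → ℂ) (hg : ∀ μ ν, g μ ν = g ν μ)
    (γ : Fin D → Matrix (Fin d) (Fin d) ℂ)
    (hγ : ∀ μ ν, γ μ * γ ν + γ ν * γ μ =
      (2 * g μ ν) • (1 : Matrix (Fin d) (Fin d) ℂ))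
    (p : Fin D → ℂ)
    (V : Fin D → Matrix (Fin 3) (Fin 3) (Matrix (Fin d) (Fin d) ℂ))
    (hV : ∀ μ, V μ = !![0, γ μ, 0; 0, 0, γ μ; p μ • 1, 0, 0]) :
    ∀ μ ν ρ : Fin D,
      V μ * V ν * V ρ + V μ * V ρ * V ν + V ν * V μ * V ρ +
      V ν * V ρ * V μ + V ρ * V μ * V ν + V ρ * V ν * V μ =
      (2 * (g μ ν * p ρ + g μ ρ * p ν + g ν ρ * p μ)) •
        (1 : Matrix (Fin 3) (Fin 3) (Matrix (Fin d) (Fin d) ℂ)) := by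
  intro μ ν ρ
  simp only [hV, Matrix.mul_fin_three, mul_zero, zero_mul, add_zero,
    zero_add, mul_one, Matrix.one_fin_three, Matrix.smul_of, Matrix.smul_cons, smul_zero,
    Matrix.smul_empty]
  refine Matrix.ext fun i j => ?_
  fin_cases i <;> fin_cases j <;>
    simp [mul_smul_comm, smul_mul_assoc] <;>
  first
  | rfl
  | simp [Matrix.vecHead, Matrix.vecTail]
  | linear_combination (norm := module) p ρ • hγ μ ν + p ν • hγ μ ρ + p μ • hγ ν ρ
end

section
/- Let D ≥ 1, d ≥ 1, let g : Fin D → Fin D → ℂ be symmetric, and let Σ, Σ̃ : Fin D → M_d(ℂ) satisfy Σ_μ Σ̃_ν + Σ_ν Σ̃_μ = 2 g(μ,ν)·I_d and Σ̃_μ Σ_ν + Σ̃_ν Σ_μ = 2 g(μ,ν)·I_d for all μ,ν. Let p : Fin D → ℂ. In the ring of 3×3 block matrices over M_d(ℂ), define V⁺_μ to be the block matrix whose (1,2)-block is Σ_μ, whose (2,3)-block is Σ̃_μ, whose (3,1)-block is p(μ)·I_d, and whose other blocks are zero. Then for all μ,ν,ρ ∈ Fin D: {V⁺_μ, V⁺_ν,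 V⁺_ρ} = 2(g(μ,ν)p(ρ) + g(μ,ρ)p(ν) + g(ν,ρ)p(μ))·I. -/
private lemma tripleW {R : Type*} [NonUnitalNonAssocSemiring R]
    (x1 y1 z1 x2 y2 z2 x3 y3 z3 : R) :
    (!![0, x1, 0; 0, 0, y1; z1, 0, 0] * !![0, x2, 0; 0, 0, y2; z2, 0, 0]) *
      !![0, x3, 0; 0, 0, y3; z3, 0, 0] =
    !![x1 * y2 * z3, 0, 0; 0, y1 * z2 * x3, 0; 0, 0, z1 * x2 * y3] := by
  simp [Matrix.mul_fin_three]

private lemma sum6diag {R : Type*} [AddCommMonoid R]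
    (a1 a2 a3 a4 a5 a6 b1 b2 b3 b4 b5 b6 c1 c2 c3 c4 c5 c6 a b c : R)
    (ha : a1 + a2 + (a3 + a4 + (a5 + a6)) = a)
    (hb : b1 + b2 + (b3 + b4 + (b5 + b6)) = b)
    (hc : c1 + c2 + (c3 + c4 + (c5 + c6)) = c) :
    !![a1, 0, 0; 0, b1, 0; 0, 0, c1] + !![a2, 0, 0; 0, b2, 0; 0, 0, c2] +
      !![a3, 0, 0; 0, b3, 0; 0, 0, c3] + !![a4, 0, 0; 0, b4, 0; 0, 0, c4] +
      !![a5, 0, 0; 0, b5, 0; 0, 0, c5] + !![a6, 0, 0; 0, b6, 0; 0, 0, c6] =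
    !![a, 0, 0; 0, b, 0; 0, 0, c] := by
  subst ha hb hc
  ext i j
  fin_cases i <;> fin_cases j <;> simp [add_assoc, Matrix.vecHead, Matrix.vecTail]

private lemma smul_one_fin_three' {R S : Type*} [Semiring R] [Monoid S]
    [DistribMulAction S R] (c : S) :
    c • (1 : Matrix (Fin 3) (Fin 3) R) = !![c • 1, 0, 0; 0, c • 1, 0; 0, 0, c • 1] := by
  ext i j
  fin_cases i <;> fin_cases j <;> simp [Matrix.vecHead, Matrix.vecTail]



/-- The chiral (irreducible) block realization of the cubic extension of the Poincaré
algebra: with `Σ_μ Σ̃_ν + Σ_ν Σ̃_μ = Σ̃_μ Σ_ν + Σ̃_ν Σ_μ = 2g_{μν}·1`, the matrices `V⁺_μ`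
satisfy `{V⁺_μ, V⁺_ν, V⁺_ρ} = 2(g_{μν}p_ρ + g_{μρ}p_ν + g_{νρ}p_μ)·1`. -/
theorem cubic_bracket_chiral_blocks
    (D d : ℕ) (hD : 1 ≤ D) (hd : 1 ≤ d)
    (g : Fin D → Fin D → ℂ) (hg : ∀ μ ν, g μ ν = g ν μ)
    (Sig SigT : Fin D → Matrix (Fin d) (Fin d) ℂ)
    (hSig : ∀ μ ν, Sig μ * SigT ν + Sig ν * SigT μ =
      (2 * g μ ν) • (1 : Matrix (Fin d) (Fin d) ℂ))
    (hSigT : ∀ μ ν, SigT μ * Sig ν + SigT ν * Sig μ =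
      (2 * g μ ν) • (1 : Matrix (Fin d) (Fin d) ℂ))
    (p : Fin D → ℂ)
    (V : Fin D → Matrix (Fin 3) (Fin 3) (Matrix (Fin d) (Fin d) ℂ))
    (hV : ∀ μ, V μ = !![0, Sig μ, 0; 0, 0, SigT μ; p μ • 1, 0, 0]) :
    ∀ μ ν ρ : Fin D,
      V μ * V ν * V ρ + V μ * V ρ * V ν + V ν * V μ * V ρ +
      V ν * V ρ * V μ + V ρ * V μ * V ν + V ρ * V ν * V μ =
      (2 * (g μ ν * p ρ + g μ ρ * p ν + g ν ρ * p μ)) •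
        (1 : Matrix (Fin 3) (Fin 3) (Matrix (Fin d) (Fin d) ℂ)) := by
  
  intro μ ν ρ
  rw [hV μ, hV ν, hV ρ, tripleW, tripleW, tripleW, tripleW, tripleW, tripleW]
  set c : ℂ := 2 * (g μ ν * p ρ + g μ ρ * p ν + g ν ρ * p μ) with hc
  have e1 : (Sig μ * SigT ν) * (p ρ • 1) + (Sig μ * SigT ρ) * (p ν • 1) +
      ((Sig ν * SigT μ) * (p ρ • 1) + (Sig ν * SigT ρ) * (p μ • 1) +
      ((Sig ρ * SigT μ) * (p ν • 1) + (Sig ρ * SigT ν) * (p μ • 1))) =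
      c • (1 : Matrix (Fin d) (Fin d) ℂ) := by
    calc _ = p ρ • (Sig μ * SigT ν + Sig ν * SigT μ) +
            (p ν • (Sig μ * SigT ρ + Sig ρ * SigT μ) +
             p μ • (Sig ν * SigT ρ + Sig ρ * SigT ν)) := by
          simp only [mul_smul_comm, mul_one, smul_add]; abel
      _ = _ := by rw [hSig μ ν, hSig μ ρ, hSig ν ρ, hc]; simp [smul_smul]; module
  have e2 : (SigT μ * (p ν • 1)) * Sig ρ + (SigT μ * (p ρ • 1)) * Sig ν +
      ((SigT ν * (p μ • 1)) * Sig ρ + (SigT ν * (p ρ • 1)) * Sig μ +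
      ((SigT ρ * (p μ • 1)) * Sig ν + (SigT ρ * (p ν • 1)) * Sig μ)) =
      c • (1 : Matrix (Fin d) (Fin d) ℂ) := by
    calc _ = p ρ • (SigT μ * Sig ν + SigT ν * Sig μ) +
            (p ν • (SigT μ * Sig ρ + SigT ρ * Sig μ) +
             p μ • (SigT ν * Sig ρ + SigT ρ * Sig ν)) := by
          simp only [mul_smul_comm, smul_mul_assoc, mul_one, smul_add]; abel
      _ = _ := by rw [hSigT μ ν, hSigT μ ρ, hSigT ν ρ, hc]; simp [smul_smul]; module
  have e3 : ((p μ • 1) * Sig ν) * SigT ρ + ((p μ • 1) * Sig ρ) * SigT ν +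
      (((p ν • 1) * Sig μ) * SigT ρ + ((p ν • 1) * Sig ρ) * SigT μ +
      (((p ρ • 1) * Sig μ) * SigT ν + ((p ρ • 1) * Sig ν) * SigT μ)) =
      c • (1 : Matrix (Fin d) (Fin d) ℂ) := by
    calc _ = p ρ • (Sig μ * SigT ν + Sig ν * SigT μ) +
            (p ν • (Sig μ * SigT ρ + Sig ρ * SigT μ) +
             p μ • (Sig ν * SigT ρ + Sig ρ * SigT ν)) := by
          simp only [smul_mul_assoc, one_mul, smul_add]; abel
      _ = _ := by rw [hSig μ ν, hSig μ ρ, hSig ν ρ, hc]; simp [smul_smul]; module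
  rw [smul_one_fin_three']
  exact sum6diag _ _ _ _ _ _ _ _ _ _ _ _ _ _ _ _ _ _ _ _ _
    e1 e2 e3
end

section
/- Let R be a commutative ring, n ≥ 1, and x₁,…,x_n ∈ R. Let M ∈ M_n(R) be the matrix with M_{i,i+1} = x_i for 1 ≤ i ≤ n−1, M_{n,1} = x_n, and all other entries 0. Then Mⁿ = (x₁ x₂ ⋯ x_n) · I_n. -/
/-- Linearization of the product polynomial: the cyclic weighted shift matrix `M`
with `M_{i,i+1} = x_i` and `M_{n,1} = x_n` satisfies `Mⁿ = (x₁⋯x_n)·I`. -/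
theorem cyclic_weighted_shift_pow
    {R : Type*} [CommRing R] (n : ℕ) (hn : 1 ≤ n)
    (x : Fin n → R) (M : Matrix (Fin n) (Fin n) R)
    (hM : ∀ i j : Fin n, M i j = if (j : ℕ) = ((i : ℕ) + 1) % n then x i else 0) :
    M ^ n = (∏ i, x i) • (1 : Matrix (Fin n) (Fin n) R) := by
  haveI : NeZero n := ⟨by omega⟩
  have key : ∀ k : ℕ, ∀ i j : Fin n, (M ^ k) i j =
      if (j : ℕ) = ((i : ℕ) + k) % n then
        ∏ t ∈ Finset.range k, x ⟨((i : ℕ) + t) % n, Nat.mod_lt _ (by omega)⟩ else 0 := by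
    intro k
    induction k with
    | zero =>
      intro i j
      simp only [pow_zero, Matrix.one_apply, Finset.range_zero, Finset.prod_empty,
        Nat.add_zero, Nat.mod_eq_of_lt i.isLt]
      by_cases h : j = i <;> simp [h, Fin.ext_iff, eq_comm]
    | succ k ih =>
      intro i j
      rw [pow_succ, Matrix.mul_apply]
      have hl : (((i : ℕ) + k) % n) < n := Nat.mod_lt _ (by omega)
      set l : Fin n := ⟨((i : ℕ) + k) % n, hl⟩ with hldef
      rw [Finset.sum_eq_single l]
      · rw [ih, hM]
        simp only [hldef, if_pos rfl]
        have hmod : (((i : ℕ) + k) % n + 1) % n = ((i : ℕ) + (k + 1)) % n := by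
          rw [Nat.mod_add_mod, Nat.add_assoc]
        rw [hmod, Finset.prod_range_succ]
        by_cases h : (j : ℕ) = ((i : ℕ) + (k + 1)) % n <;> simp [h]
      · intro b _ hb
        rw [ih]
        by_cases h : (b : ℕ) = ((i : ℕ) + k) % n
        · exact absurd (Fin.ext h) hb
        · simp [h]
      · simp
  have hdiag : ∀ i : Fin n, ((i : ℕ) + n) % n = (i : ℕ) := by
    intro i; rw [Nat.add_mod_right]; exact Nat.mod_eq_of_lt i.isLt
  ext i j
  rw [key n i j]
  have hprod : (∏ t ∈ Finset.range n, x ⟨((i : ℕ) + t) % n, Nat.mod_lt _ (by omega)⟩)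
      = ∏ t, x t := by
    have h1 : ∀ t ∈ Finset.range n,
        x ⟨((i : ℕ) + t) % n, Nat.mod_lt _ (by omega)⟩ = x (i + Fin.ofNat n t) := by
      intro t ht
      congr 1
      apply Fin.ext
      simp [Fin.add_def, Fin.val_natCast, Fin.val_ofNat, Nat.add_mod]
    rw [Finset.prod_congr rfl h1, ← Fin.prod_univ_eq_prod_range (fun t : ℕ => x (i + Fin.ofNat n t))]
    · rw [Fintype.prod_equiv (Equiv.addLeft i) _ x]
      intro t; simp [Equiv.addLeft]
  rw [hprod]
  simp only [Matrix.smul_apply, Matrix.one_apply, hdiag i, smul_eq_mul]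
  by_cases h : j = i
  · simp [h]
  · have h2 : (j : ℕ) ≠ (i : ℕ) := fun hc => h (Fin.ext hc)
    rw [if_neg h2, if_neg (fun hc : i = j => h hc.symm), mul_zero]
end

section
/- Let R be an associative unital ring and let q ∈ R be a central element with 1 + q + q² = 0. Let u₁,u₂,u₃,v₁,v₂,v₃ ∈ R satisfy v_k u_i = q · u_i v_k for all i,k ∈ {1,2,3}. Set w_i = u_i + v_i. Then the threefold symmetric brackets satisfy {w₁, w₂, w₃} = {u₁, u₂, u₃} + {v₁, v₂, v₃}, i.e. Σ_{σ∈S₃} w_{σ(1)}w_{σ(2)}w_{σ(3)} = Σ_{σ∈S₃} u_{σ(1)}u_{σ(2)}u_{σ(3)} + Σ_{σ∈S₃} v_{σ(1)}v_{σ(2)}v_{σ(3)}. -/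
/-- Cancellation of mixed terms in the threefold symmetric bracket under the twisted
tensor product: if `q` is central with `1 + q + q² = 0` and `v_k u_i = q·(u_i v_k)`,
then `{u₁+v₁, u₂+v₂, u₃+v₃} = {u₁,u₂,u₃} + {v₁,v₂,v₃}`. -/
theorem twisted_sum_threefold_bracket
    {R : Type*} [Ring R] (q : R) (hq_central : ∀ r : R, q * r = r * q)
    (hq : 1 + q + q ^ 2 = 0)
    (u v : Fin 3 → R)
    (hcomm : ∀ i k : Fin 3, v k * u i = q * (u i * v k))
    (w : Fin 3 → R) (hw : ∀ i, w i = u i + v i) :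
    w 0 * w 1 * w 2 + w 0 * w 2 * w 1 + w 1 * w 0 * w 2 +
      w 1 * w 2 * w 0 + w 2 * w 0 * w 1 + w 2 * w 1 * w 0 =
    (u 0 * u 1 * u 2 + u 0 * u 2 * u 1 + u 1 * u 0 * u 2 +
      u 1 * u 2 * u 0 + u 2 * u 0 * u 1 + u 2 * u 1 * u 0) +
    (v 0 * v 1 * v 2 + v 0 * v 2 * v 1 + v 1 * v 0 * v 2 +
      v 1 * v 2 * v 0 + v 2 * v 0 * v 1 + v 2 * v 1 * v 0) := by
  have L1 : ∀ a b c : Fin 3,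
      u a * u b * v c + u a * (v c * u b) + v c * (u a * u b) = 0 := by
    intro a b c
    have e2 : u a * (v c * u b) = q * (u a * u b * v c) := by
      rw [hcomm, ← mul_assoc, ← hq_central, mul_assoc, mul_assoc]
    have e3 : v c * (u a * u b) = q ^ 2 * (u a * u b * v c) := by
      rw [← mul_assoc, hcomm, mul_assoc q, mul_assoc (u a), hcomm,
        ← mul_assoc (u a) q, ← hq_central]
      noncomm_ring
    rw [e2, e3]
    have : u a * u b * v c + q * (u a * u b * v c) + q ^ 2 * (u a * u b * v c)
        = (1 + q + q ^ 2) * (u a * u b * v c) := by noncomm_ring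
    rw [this, hq, zero_mul]
  have L2 : ∀ a b c : Fin 3,
      u a * (v b * v c) + v b * (u a * v c) + v b * v c * u a = 0 := by
    intro a b c
    have e2 : v b * (u a * v c) = q * (u a * (v b * v c)) := by
      rw [← mul_assoc, hcomm, mul_assoc, mul_assoc]
    have e3 : v b * v c * u a = q ^ 2 * (u a * (v b * v c)) := by
      rw [mul_assoc, hcomm, ← mul_assoc (v b), ← hq_central, mul_assoc q,
        ← mul_assoc (v b), hcomm]
      noncomm_ring
    rw [e2, e3]
    have : u a * (v b * v c) + q * (u a * (v b * v c)) + q ^ 2 * (u a * (v b * v c))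
        = (1 + q + q ^ 2) * (u a * (v b * v c)) := by noncomm_ring
    rw [this, hq, zero_mul]
  simp only [hw]
  linear_combination (norm := noncomm_ring)
    L1 0 1 2 + L1 0 2 1 + L1 1 0 2 + L1 1 2 0 + L1 2 0 1 + L1 2 1 0 +
    L2 0 1 2 + L2 0 2 1 + L2 1 0 2 + L2 1 2 0 + L2 2 0 1 + L2 2 1 0
end

section
/- Let N ≥ 1, F ≥ 1, and let G, A, B ∈ M_N(ℂ). Let q ∈ ℂ satisfy Σ_{a=0}^{F−1} qᵃ = 0, and suppose G·A = q·(A·G). Then Σ_{a=0}^{F−1} Tr(G · Aᵃ · B · A^{F−1−a}) = 0. -/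
lemma comm_pow_aux (N : ℕ) (G A : Matrix (Fin N) (Fin N) ℂ) (q : ℂ)
    (hGA : G * A = q • (A * G)) (a : ℕ) : G * A ^ a = q ^ a • (A ^ a * G) := by
  induction a with
  | zero => simp
  | succ n ih =>
    rw [pow_succ, ← mul_assoc, ih, smul_mul_assoc, mul_assoc, hGA, pow_succ,
      mul_smul_comm, smul_smul, ← mul_assoc]

/-- The graded-trace argument: if `Σ_{a=0}^{F−1} qᵃ = 0` and `G·A = q·(A·G)`, then
`Σ_{a=0}^{F−1} Tr(G·Aᵃ·B·A^{F−1−a}) = 0`. -/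
theorem graded_trace_vanishes
    (N F : ℕ) (hN : 1 ≤ N) (hF : 1 ≤ F)
    (G A B : Matrix (Fin N) (Fin N) ℂ) (q : ℂ)
    (hq : ∑ a ∈ Finset.range F, q ^ a = 0)
    (hGA : G * A = q • (A * G)) :
    ∑ a ∈ Finset.range F, (G * A ^ a * B * A ^ (F - 1 - a)).trace = 0 := by
  have key : ∀ a ∈ Finset.range F,
      (G * A ^ a * B * A ^ (F - 1 - a)).trace = q ^ a * (G * B * A ^ (F - 1)).trace := by
    intro a ha
    rw [Finset.mem_range] at ha
    have h1 : G * A ^ a * B * A ^ (F - 1 - a)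
        = q ^ a • (A ^ a * (G * B * A ^ (F - 1 - a))) := by
      rw [comm_pow_aux N G A q hGA a]
      simp only [smul_mul_assoc, mul_assoc]
    rw [h1, Matrix.trace_smul, smul_eq_mul, Matrix.trace_mul_comm, mul_assoc,
      ← pow_add]
    have h2 : F - 1 - a + a = F - 1 := by omega
    rw [h2]
  rw [Finset.sum_congr rfl key, ← Finset.sum_mul, hq, zero_mul]
end

section
/- Let F ≥ 2 and let A ∈ M_F(ℝ) be the matrix with A_{k+1,k} = √(k(F−k)) for 1 ≤ k ≤ F−1 and all other entries 0, and let B ∈ M_F(ℝ) be the matrix whose only nonzero entry is B_{1,F} = 1/(F−1)!. Then: (i) A^F = 0; (ii) Σ_{j=0}^{F−1} Aʲ·B·A^{F−1−j} = I_F (equivalently, the F-fold symmetric bracket with F−1 copies of A and one copy of B equals (F−1)!·I_F); (iii) for all i,j,k ≥ 0 with i+j+k = F−2, Aⁱ·B·Aʲ·B·Aᵏ = 0; and (iv) (Aᵀ)^{F−1} = (F−1)!·E_{1F}, so that B = (1/(F−1)!²)·(Aᵀ)^{F−1}, where E_{1F} is the elementary matrix with a single 1 in position (1,F). -/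
open Matrix Finset

namespace LittleAlgebraAux

/-- Entry formula for powers of the subdiagonal matrix. -/
lemma pow_apply (F : ℕ) (A : Matrix (Fin F) (Fin F) ℝ)
    (hA : ∀ i j : Fin F, A i j =
      if (i : ℕ) = (j : ℕ) + 1 then Real.sqrt ((i.val : ℝ) * ((F : ℝ) - (i.val : ℝ)))
      else 0) (m : ℕ) (i j : Fin F) :
    (A ^ m) i j = if (i : ℕ) = (j : ℕ) + m then
      ∏ s ∈ range m,
        Real.sqrt ((((j : ℕ) + 1 + s : ℕ) : ℝ) * ((F : ℝ) - (((j : ℕ) + 1 + s : ℕ) : ℝ)))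
      else 0 := by
  induction m generalizing i with
  | zero =>
    simp only [pow_zero, Matrix.one_apply, Nat.add_zero, range_zero, prod_empty]
    by_cases h : i = j
    · simp [h]
    · rw [if_neg h, if_neg (fun hv => h (Fin.ext hv))]
  | succ m ih =>
    rw [pow_succ', Matrix.mul_apply]
    by_cases h : (i : ℕ) = (j : ℕ) + m + 1
    · have hk : (j : ℕ) + m < F := by have := i.isLt; omega
      rw [if_pos (by omega)]
      rw [Finset.sum_eq_single_of_mem (⟨(j : ℕ) + m, hk⟩ : Fin F) (mem_univ _)]
      · rw [ih, hA, if_pos (by simpa using h), if_pos (by simp)]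
        rw [Finset.prod_range_succ]
        rw [mul_comm]
        congr 2 <;> push_cast <;> rw [h] <;> push_cast <;> ring
      · intro k _ hk'
        rw [ih, if_neg, mul_zero]
        intro hv
        exact hk' (Fin.ext (by simpa using hv))
    · rw [if_neg (by omega)]
      apply Finset.sum_eq_zero
      intro k _
      rw [hA, ih]
      by_cases h1 : (i : ℕ) = (k : ℕ) + 1
      · rw [if_pos h1, if_neg (by omega), mul_zero]
      · rw [if_neg h1, zero_mul]

lemma prod_sqrt (F : ℕ) (hF : 1 ≤ F) :
    ∏ s ∈ range (F - 1),
      Real.sqrt (((0 + 1 + s : ℕ) : ℝ) * ((F : ℝ) - ((0 + 1 + s : ℕ) : ℝ)))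
      = (Nat.factorial (F - 1) : ℝ) := by
  obtain ⟨n, rfl⟩ : ∃ n, F = n + 1 := ⟨F - 1, by omega⟩
  simp only [Nat.add_sub_cancel, zero_add]
  have key : ∀ s ∈ range n,
      Real.sqrt (((1 + s : ℕ) : ℝ) * (((n + 1 : ℕ) : ℝ) - ((1 + s : ℕ) : ℝ)))
        = Real.sqrt ((s + 1 : ℕ)) * Real.sqrt ((n - s : ℕ)) := by
    intro s hs
    have hsn : s < n := mem_range.mp hs
    rw [← Real.sqrt_mul (by positivity)]
    congr 1
    have h1 : ((n - s : ℕ) : ℝ) = (n : ℝ) - s := by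
      have := Nat.cast_sub (le_of_lt hsn) (R := ℝ)
      simpa using this
    push_cast [h1]
    ring
  rw [Finset.prod_congr rfl key, Finset.prod_mul_distrib]
  have hrefl : ∏ s ∈ range n, Real.sqrt ((n - s : ℕ))
      = ∏ s ∈ range n, Real.sqrt ((s + 1 : ℕ)) := by
    rw [← Finset.prod_range_reflect (fun j => Real.sqrt ((j + 1 : ℕ))) n]
    apply Finset.prod_congr rfl
    intro s hs
    have hsn : s < n := mem_range.mp hs
    congr 2
    omega
  rw [hrefl, ← Finset.prod_mul_distrib]
  have hsq : ∀ s ∈ range n, Real.sqrt ((s + 1 : ℕ)) * Real.sqrt ((s + 1 : ℕ))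
      = ((s + 1 : ℕ) : ℝ) := fun s _ => Real.mul_self_sqrt (by positivity)
  rw [Finset.prod_congr rfl hsq, ← Nat.cast_prod,
    Finset.prod_range_add_one_eq_factorial]

end LittleAlgebraAux

open LittleAlgebraAux

/-- The matrices `A = A⁺_{−1/F}` and `B = A⁺_{1−1/F}` of the little-algebra
representation generate the Clifford algebra of the polynomial `x^{F−1}y`:
`A^F = 0`, `{A,…,A,B} = (F−1)!·1` (i.e. `Σ_j Aʲ B A^{F−1−j} = 1`), all brackets
with two `B`'s vanish, and `B = (1/(F−1)!²)·(Aᵀ)^{F−1}`. -/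
theorem little_algebra_clifford_polynomial
    (F : ℕ) (hF : 2 ≤ F)
    (A B : Matrix (Fin F) (Fin F) ℝ)
    (hA : ∀ i j : Fin F, A i j =
      if (i : ℕ) = (j : ℕ) + 1 then Real.sqrt ((i.val : ℝ) * ((F : ℝ) - (i.val : ℝ)))
      else 0)
    (hB : ∀ i j : Fin F, B i j =
      if (i : ℕ) = 0 ∧ (j : ℕ) = F - 1 then 1 / (Nat.factorial (F - 1) : ℝ) else 0) :
    A ^ F = 0 ∧
    (∑ j ∈ Finset.range F, A ^ j * B * A ^ (F - 1 - j)) = 1 ∧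
    (∀ i j k : ℕ, i + j + k = F - 2 → A ^ i * B * A ^ j * B * A ^ k = 0) ∧
    Aᵀ ^ (F - 1) = (Nat.factorial (F - 1) : ℝ) •
      Matrix.single (⟨0, by omega⟩ : Fin F) (⟨F - 1, by omega⟩ : Fin F) 1 ∧
    B = (1 / (Nat.factorial (F - 1) : ℝ) ^ 2) • Aᵀ ^ (F - 1) := by
  have h0F : 0 < F := by omega
  have hF1 : F - 1 < F := by omega
  set z : Fin F := ⟨0, h0F⟩ with hz
  set t : Fin F := ⟨F - 1, hF1⟩ with ht
  have hzv : (z : ℕ) = 0 := rfl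
  have htv : (t : ℕ) = F - 1 := rfl
  have hP := pow_apply F A hA
  have hprod := prod_sqrt F (by omega)
  have hfac : (Nat.factorial (F - 1) : ℝ) ≠ 0 := by positivity
  -- entries of A^m * B * A^n
  have hABA : ∀ (m n : ℕ) (i j : Fin F),
      (A ^ m * B * A ^ n) i j
        = (A ^ m) i z * (1 / (Nat.factorial (F - 1) : ℝ)) * (A ^ n) t j := by
    intro m n i j
    rw [Matrix.mul_apply]
    have hrow : ∀ l : Fin F, (A ^ m * B) i l
        = (A ^ m) i z * (if (l : ℕ) = F - 1 then 1 / (Nat.factorial (F - 1) : ℝ) else 0) := by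
      intro l
      rw [Matrix.mul_apply]
      rw [Finset.sum_eq_single_of_mem z (mem_univ _)]
      · rw [hB]
        by_cases hl : (l : ℕ) = F - 1
        · simp [hzv, hl]
        · simp [hzv, hl]
      · intro k _ hk
        rw [hB, if_neg, mul_zero]
        rintro ⟨hk0, -⟩
        exact hk (Fin.ext (by rw [hzv]; exact hk0))
    rw [Finset.sum_eq_single_of_mem t (mem_univ _)]
    · rw [hrow, if_pos htv]
    · intro l _ hl
      rw [hrow, if_neg, mul_zero, zero_mul]
      intro hv
      exact hl (Fin.ext (by rw [htv]; exact hv))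
  refine ⟨?_, ?_, ?_, ?_, ?_⟩
  · -- A ^ F = 0
    ext i j
    rw [hP, if_neg (by have := i.isLt; omega)]
    rfl
  · -- sum = 1
    ext i j
    have hi := i.isLt
    have hj := j.isLt
    rw [Matrix.sum_apply]
    rw [Finset.sum_eq_single_of_mem (i : ℕ) (mem_range.mpr i.isLt)]
    · rw [hABA, hP, hP, Matrix.one_apply]
      by_cases hij : i = j
      · subst hij
        rw [if_pos (show (i : ℕ) = (z : ℕ) + (i : ℕ) from by rw [hzv]; omega),
          if_pos (show (t : ℕ) = (i : ℕ) + (F - 1 - (i : ℕ)) from by rw [htv]; omega),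
          if_pos rfl]
        simp only [hzv]
        have hPP : (∏ s ∈ range (i : ℕ),
              Real.sqrt (((0 + 1 + s : ℕ) : ℝ) * ((F : ℝ) - ((0 + 1 + s : ℕ) : ℝ)))) *
            ∏ s ∈ range (F - 1 - (i : ℕ)),
              Real.sqrt ((((i : ℕ) + 1 + s : ℕ) : ℝ) * ((F : ℝ) - (((i : ℕ) + 1 + s : ℕ) : ℝ)))
            = (Nat.factorial (F - 1) : ℝ) := by
          rw [← hprod]
          conv_rhs => rw [show F - 1 = (i : ℕ) + (F - 1 - (i : ℕ)) from by omega]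
          rw [Finset.prod_range_add]
          congr 1
          apply Finset.prod_congr rfl
          intro s _
          rw [show 0 + 1 + ((i : ℕ) + s) = (i : ℕ) + 1 + s from by omega]
        rw [mul_right_comm, mul_one_div, hPP, div_self hfac]
      · rw [if_neg hij]
        rw [if_neg (show ¬ (t : ℕ) = (j : ℕ) + (F - 1 - (i : ℕ)) from by
          rw [htv]
          have hij' : (i : ℕ) ≠ (j : ℕ) := fun hv => hij (Fin.ext hv)
          omega), mul_zero]
    · intro m hm hmi
      rw [hABA, hP, if_neg (by rw [hzv]; omega), zero_mul, zero_mul]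
  · -- two B's vanish
    intro i j k hijk
    have hXB : A ^ i * B * A ^ j * B = 0 := by
      ext a b
      rw [Matrix.mul_apply]
      rw [show (0 : Matrix (Fin F) (Fin F) ℝ) a b = 0 from rfl]
      apply Finset.sum_eq_zero
      intro l _
      rw [hB]
      by_cases hl : (l : ℕ) = 0 ∧ (b : ℕ) = F - 1
      · obtain ⟨hl1, -⟩ := hl
        rw [hABA, hP, hP,
          if_neg (show ¬ (t : ℕ) = (l : ℕ) + j from by rw [htv, hl1]; omega), mul_zero]
        ring
      · rw [if_neg hl, mul_zero]
    rw [hXB, zero_mul]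
  · -- transpose power
    ext i j
    rw [← Matrix.transpose_pow, Matrix.transpose_apply, hP]
    simp only [Matrix.smul_apply, Matrix.single, Matrix.of_apply, smul_eq_mul]
    have hi := i.isLt
    have hj := j.isLt
    by_cases hij : (j : ℕ) = (i : ℕ) + (F - 1)
    · have hi0 : (i : ℕ) = 0 := by omega
      have hjF : (j : ℕ) = F - 1 := by omega
      rw [if_pos hij,
        if_pos ⟨Fin.ext (by rw [hi0, hzv]), Fin.ext (by rw [hjF, htv])⟩, mul_one]
      simp only [hi0]
      exact hprod
    · rw [if_neg hij, if_neg, mul_zero]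
      rintro ⟨h1, h2⟩
      apply hij
      rw [← h1, ← h2, hzv, htv]
      omega
    -- done?
  · -- B formula
    ext i j
    have hi := i.isLt
    have hj := j.isLt
    rw [← Matrix.transpose_pow, Matrix.smul_apply, Matrix.transpose_apply, hP, hB]
    by_cases hij : (j : ℕ) = (i : ℕ) + (F - 1)
    · have hi0 : (i : ℕ) = 0 := by omega
      have hjF : (j : ℕ) = F - 1 := by omega
      rw [if_pos ⟨hi0, hjF⟩, if_pos hij, smul_eq_mul]
      simp only [hi0]
      rw [hprod]
      field_simp
    · rw [if_neg hij, smul_zero, if_neg]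
      rintro ⟨h1, h2⟩
      exact hij (by omega)
end

section
/- Let ν > −1 be a real number. On the real vector space of finitely supported functions ℕ → ℝ with standard basis (e_n)_{n∈ℕ}, define linear operators a⁺ e_n = √(n + 1 + (ν/2)(1 + (−1)ⁿ)) e_{n+1}, a⁻ e_n = √(n + (ν/2)(1 − (−1)ⁿ)) e_{n−1} (with a⁻ e₀ = 0), and R e_n = (−1)ⁿ e_n. Then these operators satisfy the R-deformed Heisenberg algebra with reflection: a⁻a⁺ − a⁺a⁻ = id + ν·R, R·a⁺ + a⁺·R = 0, R·a⁻ + a⁻·R = 0, and R² = id. -/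
lemma sqrt_smul_sqrt (x : ℝ) (hx : 0 ≤ x) (v : ℕ →₀ ℝ) :
    Real.sqrt x • Real.sqrt x • v = x • v := by
  rw [smul_smul, Real.mul_self_sqrt hx]

/-- The infinite-dimensional representation of the R-deformed Heisenberg algebra with
reflection: on the basis `e_n = single n 1` of finitely supported functions ℕ → ℝ, the
operators `a⁺ e_n = √(n+1+(ν/2)(1+(−1)ⁿ)) e_{n+1}`, `a⁻ e_n = √(n+(ν/2)(1−(−1)ⁿ)) e_{n−1}`,
`R e_n = (−1)ⁿ e_n` satisfy `[a⁻,a⁺] = 1 + ν·R`, `{R,a^±} = 0`, `R² = 1`. -/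
theorem rdeformed_heisenberg_representation
    (ν : ℝ) (hν : -1 < ν)
    (ap am R : (ℕ →₀ ℝ) →ₗ[ℝ] (ℕ →₀ ℝ))
    (hap : ∀ n : ℕ, ap (Finsupp.single n 1) =
      Real.sqrt ((n : ℝ) + 1 + (ν / 2) * (1 + (-1 : ℝ) ^ n)) • Finsupp.single (n + 1) 1)
    (ham : ∀ n : ℕ, am (Finsupp.single n 1) =
      if n = 0 then 0
      else Real.sqrt ((n : ℝ) + (ν / 2) * (1 - (-1 : ℝ) ^ n)) • Finsupp.single (n - 1) 1)
    (hR : ∀ n : ℕ, R (Finsupp.single n 1) = ((-1 : ℝ) ^ n) • Finsupp.single n 1) :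
    am ∘ₗ ap - ap ∘ₗ am =
      (LinearMap.id : (ℕ →₀ ℝ) →ₗ[ℝ] (ℕ →₀ ℝ)) + ν • R ∧
    R ∘ₗ ap + ap ∘ₗ R = 0 ∧
    R ∘ₗ am + am ∘ₗ R = 0 ∧
    R ∘ₗ R = (LinearMap.id : (ℕ →₀ ℝ) →ₗ[ℝ] (ℕ →₀ ℝ)) := by
  refine ⟨?_, ?_, ?_, ?_⟩
  · apply Module.Basis.ext (Finsupp.basisSingleOne)
    intro n
    simp only [Finsupp.coe_basisSingleOne, LinearMap.sub_apply, LinearMap.comp_apply,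
      LinearMap.add_apply, LinearMap.id_apply, LinearMap.smul_apply, hap, ham, hR,
      map_smul, map_zero, smul_zero]
    rcases Nat.even_or_odd n with he | ho
    · obtain ⟨m, rfl⟩ := he
      rcases Nat.eq_zero_or_pos m with rfl | hm
      · simp only [Nat.add_zero, Nat.zero_add, Nat.add_sub_cancel, if_neg one_ne_zero,
          pow_zero, pow_one, Nat.cast_zero, Nat.cast_one, sub_zero, Nat.sub_self, if_true, map_zero]
        have hA : (0 : ℝ) + 1 + ν / 2 * (1 + 1) = (1 : ℝ) + ν / 2 * (1 - -1) := by ring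
        rw [hA, sqrt_smul_sqrt _ (by linarith)]
        have : (1 : ℝ) + ν / 2 * (1 - -1) = 1 + ν := by ring
        rw [this]; module
      · have h0 : ¬ (m + m = 0) := by omega
        have h1 : ¬ (m + m + 1 = 0) := by omega
        rw [if_neg h1, if_neg h0, map_smul, hap (m + m - 1), Nat.add_sub_cancel]
        have hmm : m + m - 1 + 1 = m + m := by omega
        have hp : (-1 : ℝ) ^ (m + m) = 1 := Even.neg_one_pow ⟨m, rfl⟩
        have hp1 : (-1 : ℝ) ^ (m + m + 1) = -1 := by rw [pow_succ, hp]; ring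
        have hpm : (-1 : ℝ) ^ (m + m - 1) = -1 := by
          have : m + m - 1 + 1 = m + m := by omega
          have h := hp
          rw [← this, pow_succ] at h
          nlinarith [h]
        rw [hmm, hp, hp1, hpm]
        have hA : ((m + m + 1 : ℕ) : ℝ) + ν / 2 * (1 - -1) =
            ((m + m : ℕ) : ℝ) + 1 + ν / 2 * (1 + 1) := by push_cast; ring
        have hC : ((m + m - 1 : ℕ) : ℝ) + 1 + ν / 2 * (1 + -1) =
            ((m + m : ℕ) : ℝ) + ν / 2 * (1 - 1) := by
          push_cast [Nat.cast_sub (by omega : 1 ≤ m + m)]; ring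
        rw [hA, hC, sqrt_smul_sqrt _ (by push_cast; nlinarith),
          sqrt_smul_sqrt _ (by push_cast; nlinarith), ← sub_smul]
        have : ((m + m : ℕ) : ℝ) + 1 + ν / 2 * (1 + 1) -
            (((m + m : ℕ) : ℝ) + ν / 2 * (1 - 1)) = 1 + ν := by ring
        rw [this]; module
    · obtain ⟨m, rfl⟩ := ho
      have h1 : ¬ (2 * m + 1 = 0) := by omega
      have h2 : ¬ (2 * m + 1 + 1 = 0) := by omega
      rw [if_neg h2, if_neg h1, map_smul, hap (2 * m + 1 - 1), Nat.add_sub_cancel,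
        Nat.add_sub_cancel]
      have hp : (-1 : ℝ) ^ (2 * m + 1) = -1 := by
        rw [pow_succ, pow_mul]; norm_num
      have hp1 : (-1 : ℝ) ^ (2 * m + 1 + 1) = 1 := by rw [pow_succ, hp]; ring
      have hp2 : (-1 : ℝ) ^ (2 * m) = 1 := by rw [pow_mul]; norm_num
      rw [hp, hp1, hp2]
      have hA : ((2 * m + 1 + 1 : ℕ) : ℝ) + ν / 2 * (1 - 1) =
          ((2 * m + 1 : ℕ) : ℝ) + 1 + ν / 2 * (1 + -1) := by push_cast; ring
      have hB : ((2 * m : ℕ) : ℝ) + 1 + ν / 2 * (1 + 1) =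
          ((2 * m + 1 : ℕ) : ℝ) + ν / 2 * (1 - -1) := by push_cast; ring
      rw [hA, hB, sqrt_smul_sqrt _ (by push_cast; nlinarith),
        sqrt_smul_sqrt _ (by push_cast; nlinarith), ← sub_smul]
      have : ((2 * m + 1 : ℕ) : ℝ) + 1 + ν / 2 * (1 + -1) -
          (((2 * m + 1 : ℕ) : ℝ) + ν / 2 * (1 - -1)) = 1 - ν := by ring
      rw [this]; module
  · apply Module.Basis.ext (Finsupp.basisSingleOne)
    intro n
    simp only [Finsupp.coe_basisSingleOne, LinearMap.add_apply, LinearMap.comp_apply,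
      LinearMap.zero_apply, hap, hR, map_smul]
    rw [pow_succ]
    module
  · apply Module.Basis.ext (Finsupp.basisSingleOne)
    intro n
    simp only [Finsupp.coe_basisSingleOne, LinearMap.add_apply, LinearMap.comp_apply,
      LinearMap.zero_apply, ham, hR, map_smul, map_zero, smul_zero]
    rcases Nat.eq_zero_or_pos n with rfl | hn
    · simp
    · rw [if_neg hn.ne', map_smul, hR]
      have : (-1 : ℝ) ^ (n - 1) = -(-1 : ℝ) ^ n := by
        have h : n - 1 + 1 = n := by omega
        have := pow_succ (-1 : ℝ) (n - 1)
        rw [h] at this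
        linarith [this]
      rw [this]
      module
  · apply Module.Basis.ext (Finsupp.basisSingleOne)
    intro n
    simp only [Finsupp.coe_basisSingleOne, LinearMap.comp_apply, LinearMap.id_apply,
      hR, map_smul, smul_smul, ← pow_add]
    rw [Even.neg_one_pow ⟨n, by ring⟩, one_smul]
end

section
/- Let R be a commutative ring in which 2 is invertible, let A be an associative unital R-algebra, ν ∈ R, and let a⁺, a⁻, ρ ∈ A satisfy a⁻a⁺ − a⁺a⁻ = 1 + ν·ρ, ρ·a⁺ + a⁺·ρ = 0, ρ·a⁻ + a⁻·ρ = 0, and ρ² = 1. Define L₊ = ½(a⁺)², L₋ = ½(a⁻)², and L₀ = ¼(a⁺a⁻ + a⁻a⁺). Then: [L₀, a⁺] = ½a⁺, [L₀, a⁻] = −½a⁻, [L₊, a⁻] = −a⁺, [L₋, a⁺] = a⁻, [L₀, L₊] = L₊, [L₀, L₋] = −L₋, and [L₊, L₋] = −2L₀. -/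
/-- The generators `a⁺, a⁻, ρ` of the R-deformed Heisenberg algebra with reflection
realize osp(1|2): with `L₊ = ½(a⁺)²`, `L₋ = ½(a⁻)²`, `L₀ = ¼(a⁺a⁻ + a⁻a⁺)`, one has
`[L₀,a^±] = ±½a^±`, `[L₊,a⁻] = −a⁺`, `[L₋,a⁺] = a⁻`, `[L₀,L±] = ±L±`, `[L₊,L₋] = −2L₀`. -/
theorem rdeformed_heisenberg_osp12
    {R : Type*} [CommRing R] [Invertible (2 : R)]
    {A : Type*} [Ring A] [Algebra R A]
    (ν : R) (ap am ρ : A)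
    (h1 : am * ap - ap * am = 1 + ν • ρ)
    (h2 : ρ * ap + ap * ρ = 0)
    (h3 : ρ * am + am * ρ = 0)
    (h4 : ρ ^ 2 = 1) :
    ∀ Lp Lm L0 : A,
      Lp = (⅟2 : R) • ap ^ 2 →
      Lm = (⅟2 : R) • am ^ 2 →
      L0 = ((⅟2 : R) * (⅟2 : R)) • (ap * am + am * ap) →
      (L0 * ap - ap * L0 = (⅟2 : R) • ap ∧
       L0 * am - am * L0 = -((⅟2 : R) • am) ∧
       Lp * am - am * Lp = -ap ∧
       Lm * ap - ap * Lm = am ∧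
       L0 * Lp - Lp * L0 = Lp ∧
       L0 * Lm - Lm * L0 = -Lm ∧
       Lp * Lm - Lm * Lp = -(2 • L0)) := by
  have h1' : am * ap = ap * am + 1 + ν • ρ := by
    rw [sub_eq_iff_eq_add.mp h1]; abel
  have hρp0 : ρ * ap = -(ap * ρ) := by
    rw [eq_neg_iff_add_eq_zero]; exact h2
  have hρm0 : ρ * am = -(am * ρ) := by
    rw [eq_neg_iff_add_eq_zero]; exact h3
  have hρρ0 : ρ * ρ = 1 := by rw [← pow_two]; exact h4
  have hc : ∀ x : A, am * (ap * x) = ap * (am * x) + x + ν • (ρ * x) := by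
    intro x
    rw [← mul_assoc, h1']
    simp [add_mul, smul_mul_assoc, mul_assoc]
  have hρp : ∀ x : A, ρ * (ap * x) = -(ap * (ρ * x)) := by
    intro x; rw [← mul_assoc, hρp0]; simp [mul_assoc]
  have hρm : ∀ x : A, ρ * (am * x) = -(am * (ρ * x)) := by
    intro x; rw [← mul_assoc, hρm0]; simp [mul_assoc]
  have hρρ : ∀ x : A, ρ * (ρ * x) = x := by
    intro x; rw [← mul_assoc, hρρ0, one_mul]
  intro Lp Lm L0 hLp hLm hL0
  subst hLp hLm hL0
  refine ⟨?_, ?_, ?_, ?_, ?_, ?_, ?_⟩ <;>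
  · simp only [pow_two, mul_assoc, mul_add, add_mul, mul_one, one_mul, mul_neg, neg_mul,
      smul_mul_assoc, mul_smul_comm, smul_add, smul_neg, smul_smul,
      hc, hρp, hρm, hρρ, h1', hρp0, hρm0, hρρ0]
    match_scalars <;>
      first
        | ring1
        | linear_combination invOf_mul_self (2:R)
        | linear_combination (-1 : R) * invOf_mul_self (2:R)
        | linear_combination (⅟2 : R) * invOf_mul_self (2:R)
        | linear_combination (-⅟2 : R) * invOf_mul_self (2:R)
        | linear_combination ((⅟2:R)^2*2 + ⅟2) * invOf_mul_self (2:R)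
        | linear_combination (-((⅟2:R)^2*2 + ⅟2)) * invOf_mul_self (2:R)
end
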